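/- Let (x_n)_{n∈ℕ} be any real-valued (deterministic) sequence and y ∈ ℝ. Let (ε_n)_{n∈ℕ} and (ε'_n)_{n∈ℕ} be sequences of real random variables with ε_n → 0 in probability and ε'_n → 0 in probability as n → ∞. Then |Φ(x_n(1+ε_n) + y + ε'_n) − Φ(x_n + y)| → 0 in probability. -/

import Mathlib

open MeasureTheory Filter

noncomputable section

/-- The standard Gaussian distribution function Φ. -/
def stdGaussianCDF (x : ℝ) : ℝ :=
  ∫ t in Set.Iic x, Real.exp (-t ^ 2 / 2) / Real.sqrt (2 * Real.pi)

lemma gauss_int : Integrable (fun t : ℝ => Real.exp (-t ^ 2 / 2) / Real.sqrt (2 * Real.pi)) := by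
  have h := integrable_exp_neg_mul_sq (show (0:ℝ) < 1/2 by norm_num)
  have h2 : Integrable (fun t : ℝ => Real.exp (-t ^ 2 / 2)) := by
    have : (fun t : ℝ => Real.exp (-t ^ 2 / 2)) = fun t : ℝ => Real.exp (-(1/2) * t ^ 2) := by
      funext t; congr 1; ring
    rw [this]; exact h
  exact h2.div_const _

lemma cdf_diff {a b : ℝ} (hab : a ≤ b) :
    stdGaussianCDF b - stdGaussianCDF a
      = ∫ t in Set.Ioc a b, Real.exp (-t ^ 2 / 2) / Real.sqrt (2 * Real.pi) := by
  unfold stdGaussianCDF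
  rw [← Set.Iic_union_Ioc_eq_Iic hab,
    setIntegral_union (Set.Iic_disjoint_Ioc le_rfl) measurableSet_Ioc
      gauss_int.integrableOn gauss_int.integrableOn]
  ring

lemma cdf_lip_aux {a b M : ℝ} (hab : a ≤ b)
    (hM : ∀ t ∈ Set.uIcc a b, Real.exp (-t ^ 2 / 2) / Real.sqrt (2 * Real.pi) ≤ M) :
    |stdGaussianCDF b - stdGaussianCDF a| ≤ M * |b - a| := by
  rw [cdf_diff hab]
  have h0 : 0 ≤ ∫ t in Set.Ioc a b, Real.exp (-t ^ 2 / 2) / Real.sqrt (2 * Real.pi) :=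
    setIntegral_nonneg measurableSet_Ioc (fun t _ => by positivity)
  rw [abs_of_nonneg h0, abs_of_nonneg (sub_nonneg.2 hab)]
  calc (∫ t in Set.Ioc a b, Real.exp (-t ^ 2 / 2) / Real.sqrt (2 * Real.pi))
      ≤ ∫ _t in Set.Ioc a b, M := by
        apply setIntegral_mono_on gauss_int.integrableOn
          (integrableOn_const measure_Ioc_lt_top.ne enorm_ne_top) measurableSet_Ioc
        intro t ht
        exact hM t (by rw [Set.uIcc_of_le hab]; exact Set.Ioc_subset_Icc_self ht)
    _ = M * (b - a) := by
        rw [setIntegral_const, measureReal_def, Real.volume_Ioc, ENNReal.toReal_ofReal (sub_nonneg.2 hab)]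
        simp [mul_comm]

lemma cdf_lip {a b M : ℝ}
    (hM : ∀ t ∈ Set.uIcc a b, Real.exp (-t ^ 2 / 2) / Real.sqrt (2 * Real.pi) ≤ M) :
    |stdGaussianCDF b - stdGaussianCDF a| ≤ M * |b - a| := by
  rcases le_total a b with h | h
  · exact cdf_lip_aux h hM
  · rw [abs_sub_comm, abs_sub_comm b a]
    exact cdf_lip_aux h (fun t ht => hM t (by rwa [Set.uIcc_comm]))

lemma estimate (x y u v η : ℝ) (hη : η ≤ 1/2) (hu : |u| ≤ η) (hv : |v| ≤ η) :
    |stdGaussianCDF (x * (1 + u) + y + v) - stdGaussianCDF (x + y)|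
      ≤ 2 * (Real.exp (3/2 + |y|) / Real.sqrt (2 * Real.pi)) * η := by
  have hη0 : 0 ≤ η := le_trans (abs_nonneg u) hu
  set a := x + y with ha
  set b := x * (1 + u) + y + v with hb
  have hsqrt : 0 < Real.sqrt (2 * Real.pi) := Real.sqrt_pos.2 (by positivity)
  have hba : b - a = x * u + v := by rw [ha, hb]; ring
  have hdiff : |b - a| ≤ (|x| + 1) * η := by
    rw [hba]
    calc |x * u + v| ≤ |x * u| + |v| := abs_add_le _ _
      _ = |x| * |u| + |v| := by rw [abs_mul]
      _ ≤ |x| * η + 1 * η := by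
          have := abs_nonneg x
          nlinarith
      _ = (|x| + 1) * η := by ring
  set M := Real.exp (3/2 + |y| - |x|/2) / Real.sqrt (2 * Real.pi) with hMdef
  have hM : ∀ t ∈ Set.uIcc a b, Real.exp (-t ^ 2 / 2) / Real.sqrt (2 * Real.pi) ≤ M := by
    intro t ht
    have h1 : |t - a| ≤ |b - a| := by
      rcases Set.mem_uIcc.mp ht with ⟨h1, h2⟩ | ⟨h1, h2⟩ <;>
        rcases abs_cases (t - a) with ⟨e1, _⟩ | ⟨e1, _⟩ <;>
        rcases abs_cases (b - a) with ⟨e2, _⟩ | ⟨e2, _⟩ <;> linarith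
    have hxa : |x| - |y| ≤ |a| := by
      have : |x| ≤ |a| + |y| := by
        calc |x| = |a + (-y)| := by rw [ha]; ring_nf
          _ ≤ |a| + |-y| := abs_add_le _ _
          _ = |a| + |y| := by rw [abs_neg]
      linarith
    have h3 : |b - a| ≤ |x|/2 + 1/2 := by
      have hx0 := abs_nonneg x
      calc |b - a| ≤ (|x| + 1) * η := hdiff
        _ ≤ (|x| + 1) * (1/2) := by nlinarith
        _ = |x|/2 + 1/2 := by ring
    have h4 : |a| - |t - a| ≤ |t| := by
      have := abs_sub_abs_le_abs_sub t a
      have h5 : |a| - |t - a| ≤ |t| - 0 := by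
        have := abs_sub_abs_le_abs_sub a t
        have : |a - t| = |t - a| := abs_sub_comm a t
        linarith [abs_sub_abs_le_abs_sub a t, abs_sub_comm a t ▸ (le_refl (|t - a|))]
      linarith [abs_sub_abs_le_abs_sub a t, (abs_sub_comm a t)]
    have htlb : |x|/2 - |y| - 1 ≤ |t| := by linarith
    have h5 : Real.exp (-t ^ 2 / 2) ≤ Real.exp (1/2 - |t|) := by
      apply Real.exp_le_exp.2
      nlinarith [sq_abs t, sq_nonneg (|t| - 1)]
    have h6 : Real.exp (1/2 - |t|) ≤ Real.exp (3/2 + |y| - |x|/2) := by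
      apply Real.exp_le_exp.2; linarith
    rw [hMdef]
    exact div_le_div_of_nonneg_right (le_trans h5 h6) hsqrt.le
  have hkey : M * (|x| + 1) ≤ 2 * (Real.exp (3/2 + |y|) / Real.sqrt (2 * Real.pi)) := by
    rw [hMdef]
    have hexp : Real.exp (3/2 + |y| - |x|/2) * (|x| + 1) ≤ 2 * Real.exp (3/2 + |y|) := by
      rw [Real.exp_sub]
      have h1 : |x|/2 + 1 ≤ Real.exp (|x|/2) := by
        have := Real.add_one_le_exp (|x|/2); linarith
      have h2 : |x| + 1 ≤ 2 * Real.exp (|x|/2) := by linarith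
      have h3 : 0 < Real.exp (|x|/2) := Real.exp_pos _
      have h4 : 0 < Real.exp (3/2 + |y|) := Real.exp_pos _
      rw [div_mul_eq_mul_div, div_le_iff₀ h3]
      nlinarith
    rw [div_mul_eq_mul_div, ← mul_div_assoc]
    gcongr
  calc |stdGaussianCDF b - stdGaussianCDF a| ≤ M * |b - a| := cdf_lip hM
    _ ≤ M * ((|x| + 1) * η) := by
        apply mul_le_mul_of_nonneg_left hdiff
        rw [hMdef]; positivity
    _ = M * (|x| + 1) * η := by ring
    _ ≤ 2 * (Real.exp (3/2 + |y|) / Real.sqrt (2 * Real.pi)) * η :=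
        mul_le_mul_of_nonneg_right hkey hη0

theorem gaussianCDF_approximation
    {Ω : Type*} [MeasurableSpace Ω] (μ : Measure Ω) [IsProbabilityMeasure μ]
    (x : ℕ → ℝ) (y : ℝ) (e e' : ℕ → Ω → ℝ)
    (he : ∀ δ : ℝ, 0 < δ →
      Tendsto (fun n => μ {ω | δ ≤ |e n ω|}) atTop (nhds 0))
    (he' : ∀ δ : ℝ, 0 < δ →
      Tendsto (fun n => μ {ω | δ ≤ |e' n ω|}) atTop (nhds 0)) :
    ∀ δ : ℝ, 0 < δ →
      Tendsto
        (fun n => μ {ω |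
          δ ≤ |stdGaussianCDF (x n * (1 + e n ω) + y + e' n ω)
                - stdGaussianCDF (x n + y)|})
        atTop (nhds 0) := by
  intro δ hδ
  set C := Real.exp (3/2 + |y|) / Real.sqrt (2 * Real.pi) with hC
  have hC0 : 0 < C := by rw [hC]; positivity
  set η := min (1/2 : ℝ) (δ / (4 * C)) with hηdef
  have hη0 : 0 < η := lt_min (by norm_num) (by positivity)
  have hsub : ∀ n, {ω | δ ≤ |stdGaussianCDF (x n * (1 + e n ω) + y + e' n ω)
      - stdGaussianCDF (x n + y)|} ⊆ {ω | η ≤ |e n ω|} ∪ {ω | η ≤ |e' n ω|} := by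
    intro n ω hω
    simp only [Set.mem_setOf_eq] at hω
    by_contra hc
    simp only [Set.mem_union, Set.mem_setOf_eq, not_or, not_le] at hc
    have hest := estimate (x n) y (e n ω) (e' n ω) η (min_le_left _ _) hc.1.le hc.2.le
    have h2 : 2 * C * η ≤ δ / 2 := by
      have : η ≤ δ / (4 * C) := min_le_right _ _
      calc 2 * C * η ≤ 2 * C * (δ / (4 * C)) := by nlinarith
        _ = δ / 2 := by field_simp; ring
    rw [← hC] at hest
    linarith
  have hlim : Tendsto (fun n => μ {ω | η ≤ |e n ω|} + μ {ω | η ≤ |e' n ω|})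
      atTop (nhds 0) := by
    simpa using (he η hη0).add (he' η hη0)
  refine tendsto_of_tendsto_of_tendsto_of_le_of_le tendsto_const_nhds hlim
    (fun n => zero_le) (fun n => ?_)
  exact (measure_mono (hsub n)).trans (measure_union_le _ _)

end
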